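/- arXiv:2404.12213 — 8 statements merged into one kernel-verified Lean document; each statement's English description precedes it below -/
import Mathlib

section
/- Bregman cocoercivity: if a convex differentiable function f is L-relatively smooth with respect to h (i.e., D_f(x,y) ≤ L·D_h(x,y) for all x,y), then for any step size η ≤ 1/L and all x, y, one has D_{h*}(∇h(x) - η[∇f(x) - ∇f(y)], ∇h(x)) ≤ η·D_f(x,y). -/
open MeasureTheory
open scoped RealInnerProductSpace

lemma grad_ineq {d : ℕ} {f : EuclideanSpace ℝ (Fin d) → ℝ}
    {f' : EuclideanSpace ℝ (Fin d) → EuclideanSpace ℝ (Fin d)}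
    (hfconv : ConvexOn ℝ Set.univ f)
    (hfgrad : ∀ x, HasGradientAt f (f' x) x)
    (x y : EuclideanSpace ℝ (Fin d)) :
    f x + ⟪f' x, y - x⟫ ≤ f y := by
  set c : ℝ → EuclideanSpace ℝ (Fin d) := fun t => x + t • (y - x) with hc
  have hφ : ConvexOn ℝ Set.univ (f ∘ c) := by
    have := hfconv.comp_affineMap (AffineMap.lineMap x y)
    have hcl : (f ∘ (AffineMap.lineMap x y : ℝ →ᵃ[ℝ] _)) = f ∘ c := by
      funext t
      simp [hc, AffineMap.lineMap_apply, Function.comp]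
      abel_nf
    rw [Set.preimage_univ] at this
    rwa [hcl] at this
  have hcd : HasDerivAt c (y - x) 0 := by
    simpa [hc] using ((hasDerivAt_id (0:ℝ)).smul_const (y - x)).const_add x
  have hfd : HasFDerivAt f (InnerProductSpace.toDual ℝ _ (f' x)) x :=
    hasGradientAt_iff_hasFDerivAt.mp (hfgrad x)
  have hc0 : c 0 = x := by simp [hc]
  have hfd' : HasFDerivAt f (InnerProductSpace.toDual ℝ _ (f' x)) (c 0) := by
    rw [hc0]; exact hfd
  have hcomp : HasDerivAt (f ∘ c) ⟪f' x, y - x⟫ 0 := by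
    have := hfd'.comp_hasDerivAt 0 hcd
    simpa only [InnerProductSpace.toDual_apply_apply] using this
  have hslope := hφ.le_slope_of_hasDerivAt (Set.mem_univ 0) (Set.mem_univ 1)
    one_pos hcomp
  have : slope (f ∘ c) 0 1 = f y - f x := by
    simp [slope, hc, Function.comp]
  rw [this] at hslope
  linarith

/-- Bregman divergence of `g` with gradient map `g'`. -/
noncomputable def Dbreg {d : ℕ} (g : EuclideanSpace ℝ (Fin d) → ℝ)
    (g' : EuclideanSpace ℝ (Fin d) → EuclideanSpace ℝ (Fin d))
    (x y : EuclideanSpace ℝ (Fin d)) : ℝ :=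
  g x - g y - ⟪g' y, x - y⟫

/-- Bregman cocoercivity. -/
theorem bregman_cocoercivity {d : ℕ}
    (h hs f : EuclideanSpace ℝ (Fin d) → ℝ)
    (h' hs' f' : EuclideanSpace ℝ (Fin d) → EuclideanSpace ℝ (Fin d))
    (L η : ℝ) (hL : 0 < L) (hη : 0 < η) (hηL : η ≤ 1 / L)
    (hconv : StrictConvexOn ℝ Set.univ h)
    (hgrad : ∀ x, HasGradientAt h (h' x) x)
    (hconj : ∀ y, hs y = ⨆ x, (⟪x, y⟫ - h x))
    (hsgrad : ∀ y, HasGradientAt hs (hs' y) y)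
    (hinv : ∀ x, hs' (h' x) = x)
    (hfconv : ConvexOn ℝ Set.univ f)
    (hfgrad : ∀ x, HasGradientAt f (f' x) x)
    (hsmooth : ∀ x y, Dbreg f f' x y ≤ L * Dbreg h h' x y) :
    ∀ x y, Dbreg hs hs' (h' x - η • (f' x - f' y)) (h' x) ≤ η * Dbreg f f' x y := by
  intro x y
  have hηL' : η * L ≤ 1 := by
    rw [le_div_iff₀ hL] at hηL; linarith
  have Gh := grad_ineq hconv.convexOn hgrad
  have Gf := grad_ineq hfconv hfgrad
  set p : EuclideanSpace ℝ (Fin d) := h' x - η • (f' x - f' y) with hp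
  -- upper bound for the conjugate's defining function at h' x
  have hub : ∀ z, ⟪z, h' x⟫ - h z ≤ ⟪x, h' x⟫ - h x := by
    intro z
    have := Gh x z
    rw [inner_sub_right] at this
    rw [real_inner_comm (h' x) z, real_inner_comm (h' x) x]
    linarith
  have hq_ge : ⟪x, h' x⟫ - h x ≤ hs (h' x) := by
    rw [hconj]
    exact le_ciSup ⟨⟪x, h' x⟫ - h x, by rintro r ⟨z, rfl⟩; exact hub z⟩ x
  -- pointwise bound for the conjugate's defining function at p
  have hpb : ∀ z, ⟪z, p⟫ - h z ≤
      η * Dbreg f f' x y + (⟪x, h' x⟫ - h x) + ⟪x, p - h' x⟫ := by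
    intro z
    have hDh : (0:ℝ) ≤ Dbreg h h' z x := by
      have := Gh x z
      rw [inner_sub_right] at this
      simp only [Dbreg, inner_sub_right]
      linarith
    have hDzy : (0:ℝ) ≤ Dbreg f f' z y := by
      have := Gf y z
      rw [inner_sub_right] at this
      simp only [Dbreg, inner_sub_right]
      linarith
    have hsm := hsmooth z x
    have h1 : η * Dbreg f f' z x ≤ η * (L * Dbreg h h' z x) :=
      mul_le_mul_of_nonneg_left hsm hη.le
    have h2 : η * (L * Dbreg h h' z x) ≤ Dbreg h h' z x := by
      nlinarith
    -- the three-point identity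
    have hid : Dbreg f f' x y + Dbreg f f' z x - ⟪x - z, f' x - f' y⟫
        = Dbreg f f' z y := by
      simp only [Dbreg, inner_sub_left, inner_sub_right]
      ring_nf
      rw [real_inner_comm x (f' x), real_inner_comm z (f' x),
        real_inner_comm x (f' y), real_inner_comm z (f' y)]
      ring
    -- expand the goal
    simp only [hp, inner_sub_right, inner_smul_right, inner_sub_left] at *
    simp only [Dbreg, inner_sub_right] at *
    rw [real_inner_comm (h' x) z, real_inner_comm (f' x) z, real_inner_comm (f' y) z,
      real_inner_comm (h' x) x, real_inner_comm (f' x) x, real_inner_comm (f' y) x]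
    nlinarith [hid, hDzy, h1, h2]
  have hp_le : hs p ≤ η * Dbreg f f' x y + (⟪x, h' x⟫ - h x) + ⟪x, p - h' x⟫ := by
    rw [hconj]
    exact ciSup_le hpb
  have : Dbreg hs hs' p (h' x) = hs p - hs (h' x) - ⟪x, p - h' x⟫ := by
    simp only [Dbreg, hinv]
  rw [this]
  linarith
end

section
/- Bounded Bregman step by function decrease: if f_ξ is L-relatively smooth with respect to h and η ≤ 1/L, then the stochastic mirror descent update x⁺ satisfies (1/η)·D_h(x, x⁺) ≤ f_ξ(x) - f_ξ(x⁺). -/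
open MeasureTheory
open scoped RealInnerProductSpace

lemma Dbreg_nonneg {d : ℕ} (g : EuclideanSpace ℝ (Fin d) → ℝ)
    (g' : EuclideanSpace ℝ (Fin d) → EuclideanSpace ℝ (Fin d))
    (hgconv : ConvexOn ℝ Set.univ g)
    (hggrad : ∀ x, HasGradientAt g (g' x) x)
    (u v : EuclideanSpace ℝ (Fin d)) : 0 ≤ Dbreg g g' u v := by
  set A : ℝ →ᵃ[ℝ] EuclideanSpace ℝ (Fin d) := AffineMap.lineMap v u
  have hφconv : ConvexOn ℝ Set.univ (g ∘ A) := by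
    have := hgconv.comp_affineMap A
    simpa using this
  have hA : ∀ t : ℝ, HasDerivAt (fun t : ℝ => A t) (u - v) t := by
    intro t
    simp only [A, AffineMap.lineMap_apply, vsub_eq_sub, vadd_eq_add]
    simpa using ((hasDerivAt_id t).smul_const (u - v)).add_const v
  have hd : HasDerivAt (g ∘ A) ⟪g' v, u - v⟫ 0 := by
    have hg : HasFDerivAt g (InnerProductSpace.toDual ℝ _ (g' v)) (A 0) := by
      simpa [A] using (hggrad v).hasFDerivAt
    simpa using hg.comp_hasDerivAt 0 (hA 0)
  have := hφconv.le_slope_of_hasDerivAt (Set.mem_univ 0) (Set.mem_univ 1) one_pos hd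
  simp only [slope_def_field, Function.comp, AffineMap.lineMap_apply, zero_smul, one_smul,
    zero_add, sub_zero, div_one, vsub_eq_sub, vadd_eq_add, sub_add_cancel] at this
  have h1 : A 1 = u := by simp [A]
  have h0 : A 0 = v := by simp [A]
  rw [h1, h0] at this
  simp only [Dbreg]
  linarith

/-- Bregman step bounded by function decrease. -/
theorem smd_step_function_decrease {d : ℕ}
    (h g : EuclideanSpace ℝ (Fin d) → ℝ)
    (h' g' : EuclideanSpace ℝ (Fin d) → EuclideanSpace ℝ (Fin d))
    (L η : ℝ) (hL : 0 < L) (hη : 0 < η) (hηL : η ≤ 1 / L)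
    (hconv : StrictConvexOn ℝ Set.univ h)
    (hgrad : ∀ x, HasGradientAt h (h' x) x)
    (hgconv : ConvexOn ℝ Set.univ g)
    (hggrad : ∀ x, HasGradientAt g (g' x) x)
    (hsmooth : ∀ u v, Dbreg g g' u v ≤ L * Dbreg h h' u v)
    (x xp : EuclideanSpace ℝ (Fin d))
    (hxp : h' xp = h' x - η • g' x) :
    (1 / η) * Dbreg h h' x xp ≤ g x - g xp := by
  have hDpx : 0 ≤ Dbreg h h' xp x := Dbreg_nonneg h h' hconv.convexOn hgrad xp x
  have key := hsmooth xp x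
  have hsum : Dbreg h h' x xp + Dbreg h h' xp x = η * ⟪g' x, x - xp⟫ := by
    simp only [Dbreg, hxp, inner_sub_left, inner_sub_right, real_inner_smul_left]
    ring
  have hE : Dbreg g g' xp x = g xp - g x - ⟪g' x, xp - x⟫ := rfl
  have hc : (⟪g' x, xp - x⟫ : ℝ) = -⟪g' x, x - xp⟫ := by
    rw [← inner_neg_right]; congr 1; abel
  rw [hE, hc] at key
  have hLη : η * L ≤ 1 := (le_div_iff₀ hL).mp hηL
  rw [one_div, inv_mul_le_iff₀ hη]
  nlinarith [mul_le_mul_of_nonneg_left key hη.le, mul_nonneg (sub_nonneg.mpr hLη) hDpx]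
end

section
/- Monotonicity in the step size: the function φ(η) = (1/η)·D_h(x, x⁺(η)), where ∇h(x⁺(η)) = ∇h(x) - η·g for a fixed vector g, has derivative φ'(η) = (1/η²)·D_h(x⁺(η), x) ≥ 0; in particular φ is nondecreasing in η. -/
open MeasureTheory
open scoped RealInnerProductSpace

lemma Dbreg_nonneg_s6 {d : ℕ} {h : EuclideanSpace ℝ (Fin d) → ℝ}
    {h' : EuclideanSpace ℝ (Fin d) → EuclideanSpace ℝ (Fin d)}
    (hconv : ConvexOn ℝ Set.univ h)
    (hgrad : ∀ z, HasGradientAt h (h' z) z)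
    (y x : EuclideanSpace ℝ (Fin d)) : 0 ≤ Dbreg h h' y x := by
  -- restrict to the segment from x to y
  set φ : ℝ → ℝ := fun t => h (x + t • (y - x)) with hφ
  have hline : ∀ t : ℝ, HasDerivAt φ ⟪h' (x + t • (y - x)), y - x⟫ t := by
    intro t
    have h1 : HasDerivAt (fun s : ℝ => x + s • (y - x)) (y - x) t := by
      simpa using ((hasDerivAt_id t).smul_const (y - x)).const_add x
    have h2 := (hgrad (x + t • (y - x))).hasFDerivAt.comp_hasDerivAt t h1
    simp at h2
    exact h2
  have hφc : ConvexOn ℝ Set.univ φ := by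
    have := hconv.comp_affineMap (AffineMap.lineMap x y)
    have he : ∀ t : ℝ, φ t = (h ∘ (AffineMap.lineMap x y)) t := by
      intro t; simp [hφ, AffineMap.lineMap_apply, add_comm]
    refine ConvexOn.congr ?_ (fun t _ => (he t).symm)
    simpa using this
  have hslope := hφc.le_slope_of_hasDerivAt (Set.mem_univ (0:ℝ)) (Set.mem_univ (1:ℝ))
      one_pos (hline 0)
  have : ⟪h' x, y - x⟫ ≤ h y - h x := by
    have h0 : φ 0 = h x := by simp [hφ]
    have h1 : φ 1 = h y := by simp [hφ]
    simpa [slope, h0, h1] using hslope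
  simp only [Dbreg]; linarith

/-- monotonicity of `φ(η) = (1/η) D_h(x, x⁺(η))` in the step size. -/
theorem phi_deriv_and_monotone {d : ℕ}
    (h : EuclideanSpace ℝ (Fin d) → ℝ)
    (h' : EuclideanSpace ℝ (Fin d) → EuclideanSpace ℝ (Fin d))
    (hC2 : ContDiff ℝ 2 h)
    (hconv : StrictConvexOn ℝ Set.univ h)
    (hgrad : ∀ z, HasGradientAt h (h' z) z)
    (x g : EuclideanSpace ℝ (Fin d))
    (xp xp' : ℝ → EuclideanSpace ℝ (Fin d))
    (hxp : ∀ η, h' (xp η) = h' x - η • g)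
    (hdiff : ∀ η, 0 < η → HasDerivAt xp (xp' η) η) :
    (∀ η, 0 < η →
        HasDerivAt (fun t => (1 / t) * Dbreg h h' x (xp t))
          ((1 / η ^ 2) * Dbreg h h' (xp η) x) η
        ∧ 0 ≤ (1 / η ^ 2) * Dbreg h h' (xp η) x)
      ∧ MonotoneOn (fun t => (1 / t) * Dbreg h h' x (xp t)) (Set.Ioi (0 : ℝ)) := by
  have key : ∀ η : ℝ, Dbreg h h' (xp η) x + Dbreg h h' x (xp η) = η * ⟪g, x - xp η⟫ := by
    intro η
    simp only [Dbreg, hxp, inner_sub_left, inner_sub_right, real_inner_smul_left]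
    ring
  have main : ∀ η, 0 < η →
      HasDerivAt (fun t => (1 / t) * Dbreg h h' x (xp t))
        ((1 / η ^ 2) * Dbreg h h' (xp η) x) η := by
    intro η hη
    -- derivative of t ↦ h (xp t)
    have hhp : HasDerivAt (fun t => h (xp t)) ⟪h' (xp η), xp' η⟫ η := by
      have h3 := (hgrad (xp η)).hasFDerivAt.comp_hasDerivAt η (hdiff η hη)
      simp at h3
      exact h3
    -- derivative of t ↦ ⟪h' (xp t), x - xp t⟫
    have hf1 : HasDerivAt (fun t : ℝ => h' x - t • g) (-g) η := by
      simpa using ((hasDerivAt_id η).smul_const g).const_sub (h' x)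
    have hf2 : HasDerivAt (fun t : ℝ => x - xp t) (-xp' η) η := by
      simpa using (hdiff η hη).const_sub x
    have hinner : HasDerivAt (fun t => (⟪h' (xp t), x - xp t⟫ : ℝ))
        (⟪h' (xp η), -xp' η⟫ + ⟪-g, x - xp η⟫) η := by
      have := hf1.inner ℝ hf2
      simp only [← hxp] at this
      exact this
    have hD : HasDerivAt (fun t => Dbreg h h' x (xp t)) ⟪g, x - xp η⟫ η := by
      have h2 := (hhp.const_sub (h x)).sub hinner
      have heq : -(⟪h' (xp η), xp' η⟫:ℝ) - (⟪h' (xp η), -xp' η⟫ + ⟪-g, x - xp η⟫)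
          = ⟪g, x - xp η⟫ := by
        rw [inner_neg_right, inner_neg_left]; ring
      rw [heq] at h2
      exact h2
    have hinv : HasDerivAt (fun t : ℝ => 1 / t) (-(1 / η ^ 2)) η := by
      simpa [one_div] using hasDerivAt_inv hη.ne'
    have : HasDerivAt (fun t => 1 / t * Dbreg h h' x (xp t))
        (-(1 / η ^ 2) * Dbreg h h' x (xp η) + 1 / η * ⟪g, x - xp η⟫) η := hinv.mul hD
    convert this using 1
    have hk := key η
    set I : ℝ := ⟪g, x - xp η⟫
    have hη2 : (η:ℝ)^2 ≠ 0 := by positivity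
    have hfact : 1 / η ^ 2 * η = 1 / η := by
      field_simp
    linear_combination (1 / η ^ 2) * hk + I * hfact
  have hnn : ∀ η : ℝ, 0 ≤ (1 / η ^ 2) * Dbreg h h' (xp η) x := fun η =>
    mul_nonneg (by positivity) (Dbreg_nonneg_s6 hconv.convexOn hgrad _ _)
  refine ⟨fun η hη => ⟨main η hη, hnn η⟩, ?_⟩
  have hint : interior (Set.Ioi (0:ℝ)) = Set.Ioi 0 := isOpen_Ioi.interior_eq
  refine monotoneOn_of_deriv_nonneg (convex_Ioi 0) ?_ ?_ ?_
  · intro t ht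
    exact (main t ht).continuousAt.continuousWithinAt
  · rw [hint]
    intro t ht
    exact (main t ht).differentiableAt.differentiableWithinAt
  · rw [hint]
    intro t ht
    rw [(main t ht).deriv]
    exact hnn t
end

section
/- The derivative of the Bregman distance along a mirror step: with x⁺(η) defined by ∇h(x⁺(η)) = ∇h(x) - η·g, one has d/dη [D_h(x, x⁺(η))] = (1/η)·(D_h(x, x⁺(η)) + D_h(x⁺(η), x)). -/
open MeasureTheory
open scoped RealInnerProductSpace

/-- derivative of the Bregman distance along a mirror step. -/
theorem bregman_step_deriv {d : ℕ}
    (h : EuclideanSpace ℝ (Fin d) → ℝ)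
    (h' : EuclideanSpace ℝ (Fin d) → EuclideanSpace ℝ (Fin d))
    (hC2 : ContDiff ℝ 2 h)
    (hconv : StrictConvexOn ℝ Set.univ h)
    (hgrad : ∀ z, HasGradientAt h (h' z) z)
    (x g : EuclideanSpace ℝ (Fin d))
    (xp : ℝ → EuclideanSpace ℝ (Fin d))
    (hxp : ∀ η, h' (xp η) = h' x - η • g)
    (η : ℝ) (hη : 0 < η)
    (v : EuclideanSpace ℝ (Fin d)) (hdiff : HasDerivAt xp v η) :
    HasDerivAt (fun t => Dbreg h h' x (xp t))
      ((1 / η) * (Dbreg h h' x (xp η) + Dbreg h h' (xp η) x)) η := by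
  have hd1 : HasDerivAt (fun t => h (xp t)) ⟪h' (xp η), v⟫ η := by
    have := (hgrad (xp η)).hasFDerivAt.comp_hasDerivAt η hdiff
    simpa [Function.comp_def] using this
  have hd2 : HasDerivAt (fun t => x - xp t) (-v) η := by
    simpa [Pi.sub_def] using (hasDerivAt_const η x).sub hdiff
  have hd3 : HasDerivAt (fun t : ℝ => h' x - t • g) (-g) η := by
    simpa [Pi.sub_def] using (hasDerivAt_const η (h' x)).sub ((hasDerivAt_id η).smul_const g)
  have hd4 := hd3.inner ℝ hd2
  have hd5 : HasDerivAt (fun t => h x - h (xp t) - ⟪h' x - t • g, x - xp t⟫)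
      (0 - ⟪h' (xp η), v⟫ - (⟪h' x - η • g, -v⟫ + ⟪-g, x - xp η⟫)) η := ((hasDerivAt_const η (h x)).sub hd1).sub hd4
  have hfun : (fun t => Dbreg h h' x (xp t)) =
      fun t => h x - h (xp t) - ⟪h' x - t • g, x - xp t⟫ := by
    funext t; simp [Dbreg, hxp]
  rw [hfun]
  convert hd5 using 1
  simp only [Dbreg, hxp, inner_neg_left, inner_neg_right, inner_sub_left,
    inner_sub_right, real_inner_smul_left, real_inner_comm (xp η) x]
  field_simp
  ring
end

section
/- Variance upper bound at the transformed optimum: if f is L-relatively smooth w.r.t. h, η ≤ 1/L, and x_η minimizes f_η(x) = f(x) - (1/η)E[D_h(x, x⁺)], then the variance σ²_{⋆,η} = (f(x_⋆) - f_η(x_η))/η satisfies σ²_{⋆,η} ≤ (1/η²)·E[D_h(x̄_η⁺, x_η⁺)], where x̄_η⁺ is the deterministic update from x_η and x_η⁺ the stochastic one. -/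
open MeasureTheory Set Filter Topology
open scoped RealInnerProductSpace

section Aux

variable {E : Type*} [NormedAddCommGroup E] [InnerProductSpace ℝ E] [CompleteSpace E]

lemma convex_combo_bound {S : Set ℝ} {g : ℝ → ℝ} (hg : ConvexOn ℝ S g) {x y z : ℝ}
    (hx : x ∈ S) (hz : z ∈ S) (hxy : x < y) (hyz : y < z) :
    g y * (z - x) ≤ (z - y) * g x + (y - x) * g z := by
  have hxz : x < z := hxy.trans hyz
  have hzx : (0:ℝ) < z - x := by linarith
  have h1 : (0:ℝ) ≤ (z - y)/(z - x) := div_nonneg (by linarith) (by linarith)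
  have h2 : (0:ℝ) ≤ (y - x)/(z - x) := div_nonneg (by linarith) (by linarith)
  have h3 : (z - y)/(z - x) + (y - x)/(z - x) = 1 := by field_simp; ring
  have h4 : ((z - y)/(z - x)) • x + ((y - x)/(z - x)) • z = y := by
    simp only [smul_eq_mul]
    field_simp
    ring
  have h5 := hg.2 hx hz h1 h2 h3
  rw [h4] at h5
  simp only [smul_eq_mul] at h5
  rw [div_mul_eq_mul_div, div_mul_eq_mul_div, ← add_div, le_div_iff₀ hzx] at h5
  linarith

lemma tangent_line_le {S : Set ℝ} {g : ℝ → ℝ} (hg : ConvexOn ℝ S g) {p t : ℝ}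
    (hp : p ∈ S) (ht : t ∈ S) {dp : ℝ} (hd : HasDerivAt g dp p) :
    g p + dp * (t - p) ≤ g t := by
  rcases lt_trichotomy p t with hpt | rfl | htp
  · have tends : Tendsto (slope g p) (𝓝[>] p) (𝓝 dp) :=
      (hasDerivAt_iff_tendsto_slope.mp hd).mono_left
        (nhdsWithin_mono p fun s hs => ne_of_gt hs)
    have hev : ∀ᶠ s in 𝓝[>] p, slope g p s ≤ slope g p t := by
      filter_upwards [Ioo_mem_nhdsGT_of_mem (Set.left_mem_Ico.mpr hpt)] with s hs
      have hb := convex_combo_bound hg hp ht hs.1 hs.2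
      rw [slope_def_field, slope_def_field,
        div_le_div_iff₀ (by linarith [hs.1] : (0:ℝ) < s - p) (by linarith : (0:ℝ) < t - p)]
      nlinarith [hb]
    have hle : dp ≤ slope g p t := le_of_tendsto tends hev
    rw [slope_def_field, le_div_iff₀ (by linarith : (0:ℝ) < t - p)] at hle
    linarith
  · simp
  · have tends : Tendsto (slope g p) (𝓝[<] p) (𝓝 dp) :=
      (hasDerivAt_iff_tendsto_slope.mp hd).mono_left
        (nhdsWithin_mono p fun s hs => ne_of_lt hs)
    have hev : ∀ᶠ s in 𝓝[<] p, slope g p t ≤ slope g p s := by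
      filter_upwards [Ioo_mem_nhdsLT_of_mem (Set.right_mem_Ioc.mpr htp)] with s hs
      have hb := convex_combo_bound hg ht hp hs.1 hs.2
      rw [slope_comm g p t, slope_comm g p s, slope_def_field, slope_def_field,
        div_le_div_iff₀ (by linarith : (0:ℝ) < p - t) (by linarith [hs.2] : (0:ℝ) < p - s)]
      nlinarith [hb]
    have hle : slope g p t ≤ dp := ge_of_tendsto tends hev
    rw [slope_comm, slope_def_field, div_le_iff₀ (by linarith : (0:ℝ) < p - t)] at hle
    linarith

lemma hasDerivAt_comp_line {g : E → ℝ} {g' : E → E} (hg : ∀ y, HasGradientAt g (g' y) y)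
    (u v : E) (t : ℝ) :
    HasDerivAt (fun s : ℝ => g (u + s • v)) ⟪g' (u + t • v), v⟫ t := by
  have hline : HasDerivAt (fun s : ℝ => u + s • v) v t := by
    simpa using ((hasDerivAt_id t).smul_const v).const_add u
  have h2 := (hg (u + t • v)).hasFDerivAt.comp_hasDerivAt t hline
  simpa [InnerProductSpace.toDual_apply_apply, Function.comp_def] using h2

lemma grad_ineq_s8 {g : E → ℝ} {g' : E → E} (hg : ConvexOn ℝ Set.univ g)
    (hgg : ∀ y, HasGradientAt g (g' y) y) (x y : E) :
    g x + ⟪g' x, y - x⟫ ≤ g y := by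
  have hconv1 : ConvexOn ℝ Set.univ (fun t : ℝ => g (x + t • (y - x))) := by
    have h0 := hg.comp_affineMap (AffineMap.lineMap x y)
    rw [Set.preimage_univ] at h0
    have heq : (fun t : ℝ => g (x + t • (y - x))) = (g ∘ (AffineMap.lineMap x y)) := by
      funext s
      simp [AffineMap.lineMap_apply_module', add_comm]
    rw [heq]
    exact h0
  have hder := hasDerivAt_comp_line hgg x (y - x) 0
  rw [zero_smul, add_zero] at hder
  have hfin := tangent_line_le hconv1 (Set.mem_univ 0) (Set.mem_univ 1) hder
  rw [show x + (1:ℝ) • (y - x) = y from by rw [one_smul]; abel] at hfin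
  simpa using hfin

end Aux

section Key

variable {E : Type*} [NormedAddCommGroup E] [InnerProductSpace ℝ E] [CompleteSpace E]

lemma bddAbove_conj {h : E → ℝ} {h' hs' : E → E} {hs : E → ℝ}
    (hconv : ConvexOn ℝ Set.univ h) (hC2 : ContDiff ℝ 2 h)
    (hgrad : ∀ z, HasGradientAt h (h' z) z)
    (hsgrad : ∀ y, HasGradientAt hs (hs' y) y)
    (hconj : ∀ y, hs y = ⨆ z, (⟪z, y⟫ - h z))
    (hinv : ∀ z, hs' (h' z) = z) :
    ∀ y₀ : E, BddAbove (Set.range fun z => ⟪z, y₀⟫ - h z) := by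
  have gradIneq : ∀ x y : E, h x + ⟪h' x, y - x⟫ ≤ h y := grad_ineq_s8 hconv hgrad
  have hbddAt : ∀ z : E, BddAbove (Set.range fun z' => ⟪z', h' z⟫ - h z') := by
    intro z
    refine ⟨⟪z, h' z⟫ - h z, ?_⟩
    rintro _ ⟨z', rfl⟩
    have h1 := gradIneq z z'
    rw [inner_sub_right] at h1
    simp only []
    linarith [real_inner_comm z' (h' z), real_inner_comm z (h' z)]
  intro y₀
  by_contra H
  -- Step A : for every z₁, ⟪z₁, y₀ - h' z₁⟫ ≤ 0
  have stepA : ∀ z₁ : E, ⟪z₁, y₀ - h' z₁⟫ ≤ 0 := by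
    intro z₁
    set u := h' z₁ with hu
    set v := y₀ - u with hv
    set y : ℝ → E := fun t => u + t • v with hy
    have hit : ∀ (z : E) (s : ℝ), ⟪z, y s⟫ = ⟪z, u⟫ + s * ⟪z, v⟫ := by
      intro z s
      simp [hy, inner_add_right, real_inner_smul_right]
    set P : ℝ → Prop := fun t => BddAbove (Set.range fun z => ⟪z, y t⟫ - h z) with hP
    have hy0 : y 0 = u := by simp [hy]
    have hy1 : y 1 = y₀ := by simp [hy, hv]
    have hP0 : P 0 := by
      simp only [hP, hy0, hu]
      exact hbddAt z₁
    have hP1 : ¬ P 1 := by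
      simp only [hP, hy1]
      exact H
    have hPcombo : ∀ a b : ℝ, P a → P b → ∀ t, a ≤ t → t ≤ b → P t := by
      intro a b hPa hPb t hta htb
      rcases hPa with ⟨Ma, hMa⟩
      rcases hPb with ⟨Mb, hMb⟩
      rcases eq_or_lt_of_le (hta.trans htb) with hab | hab
      · have ht : t = a := le_antisymm (by rw [hab]; exact htb) hta
        exact ht ▸ ⟨Ma, hMa⟩
      · set lam := (t - a)/(b - a) with hlam
        have hlam0 : 0 ≤ lam := div_nonneg (by linarith) (by linarith)
        have hlam1 : lam ≤ 1 := by
          rw [hlam, div_le_one (by linarith)]; linarith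
        refine ⟨(1 - lam)*Ma + lam*Mb, ?_⟩
        rintro _ ⟨z, rfl⟩
        have ha' : ⟪z, y a⟫ - h z ≤ Ma := hMa ⟨z, rfl⟩
        have hb' : ⟪z, y b⟫ - h z ≤ Mb := hMb ⟨z, rfl⟩
        rw [hit z a] at ha'
        rw [hit z b] at hb'
        have hteq : t = (1 - lam)*a + lam*b := by
          have hba : b - a ≠ 0 := sub_ne_zero.mpr (ne_of_gt hab)
          have hml : lam * (b - a) = t - a := by
            rw [hlam]; exact div_mul_cancel₀ _ hba
          nlinarith [hml]
        simp only []
        rw [hit z t, hteq]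
        nlinarith [mul_le_mul_of_nonneg_left ha' (by linarith : (0:ℝ) ≤ 1 - lam),
          mul_le_mul_of_nonneg_left hb' hlam0]
    set J := {t : ℝ | 0 ≤ t ∧ P t} with hJ
    have hJ0 : (0:ℝ) ∈ J := ⟨le_refl 0, hP0⟩
    have hJsub : J ⊆ Ico 0 1 := by
      rintro t ⟨ht0, hPt⟩
      refine ⟨ht0, ?_⟩
      by_contra hge
      push_neg at hge
      rcases eq_or_lt_of_le hge with he | hlt
      · exact hP1 (he ▸ hPt)
      · exact hP1 (hPcombo 0 t hP0 hPt 1 (by norm_num) hlt.le)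
    have hbddJ : BddAbove J := ⟨1, fun t ht => (hJsub ht).2.le⟩
    set τ := sSup J with hτ
    have hτ0 : 0 ≤ τ := le_csSup hbddJ hJ0
    have hτ1 : τ ≤ 1 := csSup_le ⟨0, hJ0⟩ (fun t ht => (hJsub ht).2.le)
    have hPlt : ∀ t, 0 ≤ t → t < τ → P t := by
      intro t ht0 htτ
      obtain ⟨t', ht'J, htt'⟩ := exists_lt_of_lt_csSup ⟨0, hJ0⟩ htτ
      exact hPcombo 0 t' hP0 ht'J.2 t ht0 htt'.le
    have hgt0 : ∀ t, τ < t → hs (y t) = 0 := by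
      intro t hτt
      have hnot : ¬ P t := by
        intro hPt
        exact absurd (le_csSup hbddJ ⟨hτ0.trans hτt.le, hPt⟩) (not_le.mpr hτt)
      rw [hconj (y t)]
      exact Real.iSup_of_not_bddAbove hnot
    set φ : ℝ → ℝ := fun t => hs (y t) with hφ
    have hφd : ∀ t, HasDerivAt φ ⟪hs' (y t), v⟫ t := fun t => hasDerivAt_comp_line hsgrad u v t
    have hφτ : φ τ = 0 := by
      have hseq : Tendsto (fun n : ℕ => τ + 1/(n+1)) atTop (𝓝 τ) := by
        have := tendsto_one_div_add_atTop_nhds_zero_nat (𝕜 := ℝ)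
        simpa using tendsto_const_nhds.add this
      have h1 : Tendsto (fun n : ℕ => φ (τ + 1/(n+1))) atTop (𝓝 (φ τ)) :=
        ((hφd τ).continuousAt.tendsto).comp hseq
      have h2 : ∀ n : ℕ, φ (τ + 1/((n:ℝ)+1)) = 0 := by
        intro n
        exact hgt0 _ (lt_add_of_pos_right τ (by positivity))
      rw [tendsto_congr h2] at h1
      exact tendsto_nhds_unique h1 tendsto_const_nhds
    have hδτ : ⟪hs' (y τ), v⟫ = 0 := by
      have tends : Tendsto (slope φ τ) (𝓝[>] τ) (𝓝 ⟪hs' (y τ), v⟫) :=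
        (hasDerivAt_iff_tendsto_slope.mp (hφd τ)).mono_left
          (nhdsWithin_mono τ fun s hs => ne_of_gt hs)
      have hev : slope φ τ =ᶠ[𝓝[>] τ] fun _ => (0:ℝ) := by
        filter_upwards [self_mem_nhdsWithin] with s hs
        have h0s : φ s = 0 := hgt0 s hs
        rw [slope_def_field, h0s, hφτ]
        simp
      have t2 : Tendsto (slope φ τ) (𝓝[>] τ) (𝓝 0) := by
        rw [tendsto_congr' hev]
        exact tendsto_const_nhds
      exact tendsto_nhds_unique tends t2
    rcases eq_or_lt_of_le hτ0 with hτz | hτpos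
    · have h1 := hδτ
      rw [← hτz, hy0, hu, hinv z₁] at h1
      exact le_of_eq h1
    · -- τ > 0
      have FYloc : ∀ t, 0 ≤ t → t ≤ τ → ∀ z : E, ⟪z, y t⟫ - h z ≤ φ t := by
        intro t ht0 htτ z
        rcases lt_or_eq_of_le htτ with hlt | heq
        · have hb := hPlt t ht0 hlt
          have : φ t = ⨆ z : E, (⟪z, y t⟫ - h z) := hconj (y t)
          rw [this]
          exact le_ciSup hb z
        · rw [heq]
          -- limit from the left
          have hcontL : Tendsto (fun s : ℝ => ⟪z, u⟫ + s * ⟪z, v⟫ - h z - φ s) (𝓝[<] τ) (𝓝 (⟪z, u⟫ + τ * ⟪z, v⟫ - h z - φ τ)) := by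
            apply Tendsto.mono_left _ nhdsWithin_le_nhds
            exact (((tendsto_const_nhds.add ((continuous_id.tendsto τ).mul tendsto_const_nhds)).sub
              tendsto_const_nhds).sub ((hφd τ).continuousAt.tendsto))
          have hevL : ∀ᶠ s in 𝓝[<] τ, ⟪z, u⟫ + s * ⟪z, v⟫ - h z - φ s ≤ 0 := by
            filter_upwards [Ioo_mem_nhdsLT_of_mem (Set.right_mem_Ioc.mpr hτpos)] with s hs
            have hb := hPlt s hs.1.le hs.2
            have h2 : φ s = ⨆ z : E, (⟪z, y s⟫ - h z) := hconj (y s)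
            have h3 : ⟪z, y s⟫ - h z ≤ φ s := by
              rw [h2]; exact le_ciSup hb z
            rw [hit z s] at h3
            linarith
          have hfin := le_of_tendsto hcontL hevL
          rw [hit z τ]
          linarith
      have hφconv : ConvexOn ℝ (Icc 0 τ) φ := by
        refine ⟨convex_Icc 0 τ, ?_⟩
        rintro a ⟨ha0, haτ⟩ b ⟨hb0, hbτ⟩ p q hp hq hpq
        simp only [smul_eq_mul]
        have hA := FYloc a ha0 haτ
        have hB := FYloc b hb0 hbτ
        have hmem : 0 ≤ p*a + q*b ∧ p*a + q*b ≤ τ := by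
          constructor
          · positivity
          · nlinarith
        have h2 : φ (p*a + q*b) = ⨆ z : E, (⟪z, y (p*a+q*b)⟫ - h z) := hconj _
        rw [h2]
        haveI : Nonempty E := ⟨0⟩
        apply ciSup_le
        intro z
        have hA' := hA z
        have hB' := hB z
        rw [hit z a] at hA'
        rw [hit z b] at hB'
        rw [hit z (p*a+q*b)]
        have e : ⟪z, u⟫ + (p*a + q*b)*⟪z, v⟫ - h z
            = p*(⟪z, u⟫ + a*⟪z, v⟫ - h z) + q*(⟪z, u⟫ + b*⟪z, v⟫ - h z) := by
          have hq1 : q = 1 - p := by linarith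
          rw [hq1]; ring
        rw [e]
        exact add_le_add (mul_le_mul_of_nonneg_left hA' hp) (mul_le_mul_of_nonneg_left hB' hq)
      have hdτ : HasDerivAt φ 0 τ := hδτ ▸ hφd τ
      have hA0 : 0 ≤ φ 0 := by
        have := tangent_line_le hφconv (Set.right_mem_Icc.mpr hτ0) (Set.left_mem_Icc.mpr hτ0) hdτ
        rw [hφτ] at this
        simpa using this
      have hd0 : HasDerivAt φ ⟪z₁, v⟫ 0 := by
        have h1 := hφd 0
        rw [hy0, hu, hinv z₁] at h1
        exact h1
      have hB0 := tangent_line_le hφconv (Set.left_mem_Icc.mpr hτ0) (Set.right_mem_Icc.mpr hτ0) hd0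
      rw [hφτ] at hB0
      nlinarith [hA0, hτpos, hB0]
  -- Step B : conclude y₀ = h' 0
  have hcont : Continuous h' := by
    have h1 : Continuous (fderiv ℝ h) := hC2.continuous_fderiv (by norm_num)
    have h2 : ∀ z, h' z = (InnerProductSpace.toDual ℝ E).symm (fderiv ℝ h z) := by
      intro z
      rw [(hgrad z).hasFDerivAt.fderiv, LinearIsometryEquiv.symm_apply_apply]
    rw [show h' = fun z => (InnerProductSpace.toDual ℝ E).symm (fderiv ℝ h z) from funext h2]
    exact (LinearIsometryEquiv.continuous _).comp h1
  have step2 : ∀ c : E, ⟪c, y₀ - h' 0⟫ ≤ 0 := by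
    intro c
    have hev : ∀ ε : ℝ, 0 < ε → ⟪c, y₀ - h' (ε • c)⟫ ≤ 0 := by
      intro ε hε
      have h1 := stepA (ε • c)
      rw [real_inner_smul_left] at h1
      nlinarith
    have hcont2 : Continuous fun ε : ℝ => ⟪c, y₀ - h' (ε • c)⟫ :=
      Continuous.inner continuous_const
        (continuous_const.sub (hcont.comp (continuous_id.smul continuous_const)))
    have ht : Tendsto (fun ε : ℝ => ⟪c, y₀ - h' (ε • c)⟫) (𝓝[>] (0:ℝ))
        (𝓝 ⟪c, y₀ - h' ((0:ℝ) • c)⟫) :=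
      (hcont2.tendsto 0).mono_left nhdsWithin_le_nhds
    have hb := le_of_tendsto ht (by filter_upwards [self_mem_nhdsWithin] with ε hε using hev ε hε)
    simpa using hb
  have hy0' : y₀ = h' 0 := by
    have h1 := step2 (y₀ - h' 0)
    exact sub_eq_zero.mp (real_inner_self_nonpos.mp h1)
  exact H (hy0' ▸ hbddAt 0)

lemma key_inv {h : E → ℝ} {h' hs' : E → E} {hs : E → ℝ}
    (hconv : ConvexOn ℝ Set.univ h) (hC2 : ContDiff ℝ 2 h)
    (hgrad : ∀ z, HasGradientAt h (h' z) z)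
    (hsgrad : ∀ y, HasGradientAt hs (hs' y) y)
    (hconj : ∀ y, hs y = ⨆ z, (⟪z, y⟫ - h z))
    (hinv : ∀ z, hs' (h' z) = z) :
    ∀ w : E, h' (hs' w) = w := by
  haveI : Nonempty E := ⟨0⟩
  have hbdd := bddAbove_conj hconv hC2 hgrad hsgrad hconj hinv
  have gradIneq : ∀ x y : E, h x + ⟪h' x, y - x⟫ ≤ h y := grad_ineq_s8 hconv hgrad
  have FY : ∀ y z : E, ⟪z, y⟫ - h z ≤ hs y := by
    intro y z
    rw [hconj]
    exact le_ciSup (hbdd y) z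
  have K3 : ∀ z : E, hs (h' z) = ⟪z, h' z⟫ - h z := by
    intro z
    refine le_antisymm ?_ (FY _ z)
    rw [hconj]
    apply ciSup_le
    intro z'
    have h1 := gradIneq z z'
    rw [inner_sub_right] at h1
    linarith [real_inner_comm z' (h' z), real_inner_comm z (h' z)]
  have K4 : ConvexOn ℝ Set.univ hs := by
    refine ⟨convex_univ, fun x _ y _ p q hp hq hpq => ?_⟩
    simp only [smul_eq_mul]
    rw [hconj]
    apply ciSup_le
    intro z
    have hx := FY x z
    have hy := FY y z
    have e : ⟪z, p • x + q • y⟫ - h z = p*(⟪z, x⟫ - h z) + q*(⟪z, y⟫ - h z) := by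
      rw [inner_add_right, real_inner_smul_right, real_inner_smul_right]
      have hq1 : q = 1 - p := by linarith
      rw [hq1]; ring
    rw [e]
    exact add_le_add (mul_le_mul_of_nonneg_left hx hp) (mul_le_mul_of_nonneg_left hy hq)
  have K5 : ∀ w y : E, hs w + ⟪hs' w, y - w⟫ ≤ hs y := grad_ineq_s8 K4 hsgrad
  intro w
  set x := hs' w with hx
  have m2 : h x ≤ ⟪x, w⟫ - hs w := by
    have h1 := K5 w (h' x)
    rw [K3 x, inner_sub_right] at h1
    have h2 : ⟪x, h' x⟫ = ⟪h' x, x⟫ := real_inner_comm _ _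
    linarith
  have m3 : hs w = ⟪x, w⟫ - h x := le_antisymm (by linarith) (FY w x)
  have m4 : ∀ z : E, h x + ⟪w, z - x⟫ ≤ h z := by
    intro z
    have h1 := FY w z
    rw [m3] at h1
    rw [inner_sub_right]
    have e1 : ⟪w, z⟫ = ⟪z, w⟫ := real_inner_comm _ _
    have e2 : ⟪w, x⟫ = ⟪x, w⟫ := real_inner_comm _ _
    linarith
  have m5 : ∀ v : E, ⟪h' x, v⟫ = ⟪w, v⟫ := by
    intro v
    set ρ : ℝ → ℝ := fun t => h (x + t • v) - t * ⟪w, v⟫ with hρ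
    have hρd : HasDerivAt ρ (⟪h' x, v⟫ - ⟪w, v⟫) 0 := by
      have h1 := hasDerivAt_comp_line hgrad x v 0
      rw [zero_smul, add_zero] at h1
      have h2 : HasDerivAt (fun t : ℝ => t * ⟪w, v⟫) ⟪w, v⟫ 0 := by
        simpa using (hasDerivAt_id (0:ℝ)).mul_const ⟪w, v⟫
      exact h1.sub h2
    have hminρ : ∀ t : ℝ, ρ 0 ≤ ρ t := by
      intro t
      have h1 := m4 (x + t • v)
      rw [add_sub_cancel_left, real_inner_smul_right] at h1
      simp only [hρ, zero_smul, add_zero, zero_mul, sub_zero]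
      linarith
    have hloc : IsLocalMin ρ 0 := Filter.Eventually.of_forall hminρ
    have := hloc.hasDerivAt_eq_zero hρd
    linarith
  have h6 := m5 (h' x - w)
  have h7 : ⟪h' x - w, h' x - w⟫ = 0 := by
    rw [inner_sub_left]
    linarith
  exact sub_eq_zero.mp (inner_self_eq_zero.mp h7)

end Key

open MeasureTheory
open scoped RealInnerProductSpace

/-- variance bound at the transformed optimum `x_η`. -/
theorem variance_bound_at_transformed_optimum {d : ℕ} {Ω : Type*} [MeasurableSpace Ω]
    (μ : Measure Ω) [IsProbabilityMeasure μ]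
    (h hs f : EuclideanSpace ℝ (Fin d) → ℝ)
    (h' hs' f' : EuclideanSpace ℝ (Fin d) → EuclideanSpace ℝ (Fin d))
    (fxi : Ω → EuclideanSpace ℝ (Fin d) → ℝ)
    (fxi' : Ω → EuclideanSpace ℝ (Fin d) → EuclideanSpace ℝ (Fin d))
    (L η : ℝ) (hL : 0 < L) (hη : 0 < η) (hηL : η ≤ 1 / L)
    (hconv : StrictConvexOn ℝ Set.univ h)
    (hC2 : ContDiff ℝ 2 h)
    (hgrad : ∀ z, HasGradientAt h (h' z) z)
    (hsgrad : ∀ y, HasGradientAt hs (hs' y) y)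
    (hconj : ∀ y, hs y = ⨆ z, (⟪z, y⟫ - h z))
    (hinv : ∀ z, hs' (h' z) = z)
    (hfconv : ConvexOn ℝ Set.univ f)
    (hfgrad : ∀ z, HasGradientAt f (f' z) z)
    (hfxgrad : ∀ ω z, HasGradientAt (fxi ω) (fxi' ω z) z)
    (hmean : ∀ z, ∫ ω, fxi ω z ∂μ = f z)
    (hmeangrad : ∀ z, ∫ ω, fxi' ω z ∂μ = f' z)
    (hsmooth : ∀ u v, Dbreg f f' u v ≤ L * Dbreg h h' u v)
    (xstar : EuclideanSpace ℝ (Fin d))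
    (hmin : ∀ z, f xstar ≤ f z) (hstargrad : f' xstar = 0)
    (feta : EuclideanSpace ℝ (Fin d) → ℝ)
    (hfeta : ∀ z, feta z
      = f z - (1 / η) * ∫ ω, Dbreg h h' z (hs' (h' z - η • fxi' ω z)) ∂μ)
    (xeta : EuclideanSpace ℝ (Fin d))
    (hmineta : ∀ z, feta xeta ≤ feta z)
    (hint1 : Integrable
      (fun ω => Dbreg h h' xeta (hs' (h' xeta - η • fxi' ω xeta))) μ)
    (hint2 : Integrable
      (fun ω => Dbreg h h' (hs' (h' xeta - η • f' xeta))
        (hs' (h' xeta - η • fxi' ω xeta))) μ) :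
    (f xstar - feta xeta) / η
      ≤ (1 / η ^ 2) * ∫ ω, Dbreg h h' (hs' (h' xeta - η • f' xeta))
          (hs' (h' xeta - η • fxi' ω xeta)) ∂μ := by
  classical
  have key : ∀ w, h' (hs' w) = w := key_inv hconv.convexOn hC2 hgrad hsgrad hconj hinv
  have gradIneqh : ∀ x y, h x + ⟪h' x, y - x⟫ ≤ h y := grad_ineq_s8 hconv.convexOn hgrad
  have Dnn : ∀ u v, 0 ≤ Dbreg h h' u v := by
    intro u v
    have := gradIneqh v u
    simp only [Dbreg]
    linarith
  set xb := hs' (h' xeta - η • f' xeta) with hxb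
  have hxbgrad : h' xb = h' xeta - η • f' xeta := key _
  have hxpgrad : ∀ ω, h' (hs' (h' xeta - η • fxi' ω xeta)) = h' xeta - η • fxi' ω xeta :=
    fun ω => key _
  set F₁ := fun ω => Dbreg h h' xeta (hs' (h' xeta - η • fxi' ω xeta)) with hF₁
  set F₂ := fun ω => Dbreg h h' xb (hs' (h' xeta - η • fxi' ω xeta)) with hF₂
  -- pointwise difference
  have hdiff : ∀ ω, F₁ ω - F₂ ω
      = (h xeta - h xb - ⟪h' xeta, xeta - xb⟫) + η * ⟪xeta - xb, fxi' ω xeta⟫ := by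
    intro ω
    simp only [hF₁, hF₂, Dbreg]
    rw [hxpgrad ω]
    have e : ⟪h' xeta - η • fxi' ω xeta, xeta - hs' (h' xeta - η • fxi' ω xeta)⟫
        - ⟪h' xeta - η • fxi' ω xeta, xb - hs' (h' xeta - η • fxi' ω xeta)⟫
        = ⟪h' xeta, xeta - xb⟫ - η * ⟪fxi' ω xeta, xeta - xb⟫ := by
      rw [← inner_sub_right]
      have e2 : (xeta - hs' (h' xeta - η • fxi' ω xeta))
          - (xb - hs' (h' xeta - η • fxi' ω xeta)) = xeta - xb := by abel
      rw [e2, inner_sub_left, real_inner_smul_left]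
    have e3 : ⟪xeta - xb, fxi' ω xeta⟫ = ⟪fxi' ω xeta, xeta - xb⟫ := real_inner_comm _ _
    rw [e3]
    linarith [e]
  -- integral of the difference
  have hintdiff : ∫ ω, (F₁ ω - F₂ ω) ∂μ
      = (h xeta - h xb - ⟪h' xeta, xeta - xb⟫) + η * ⟪f' xeta, xeta - xb⟫ := by
    by_cases hA : Integrable (fun ω => fxi' ω xeta) μ
    · have hrw : ∫ ω, (F₁ ω - F₂ ω) ∂μ
          = ∫ ω, ((h xeta - h xb - ⟪h' xeta, xeta - xb⟫) + η * ⟪xeta - xb, fxi' ω xeta⟫) ∂μ := by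
        congr 1
        funext ω
        rw [hdiff ω]
      rw [hrw, integral_add (integrable_const _) ((hA.const_inner _).const_mul η),
        integral_const, integral_const_mul, integral_inner hA, hmeangrad]
      have e4 : ⟪xeta - xb, f' xeta⟫ = ⟪f' xeta, xeta - xb⟫ := real_inner_comm _ _
      simp [measure_univ, e4]
    · have hstar : f' xeta = 0 := by rw [← hmeangrad xeta, integral_undef hA]
      have hxbX : xb = xeta := by rw [hxb, hstar, smul_zero, sub_zero, hinv]
      have hzero : ∀ ω, F₁ ω - F₂ ω = 0 := by
        intro ω
        simp only [hF₁, hF₂, hxbX, sub_self]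
      rw [show (fun ω => F₁ ω - F₂ ω) = fun _ => (0:ℝ) from funext hzero]
      simp [hxbX, hstar]
  have hS : ∫ ω, F₁ ω ∂μ - ∫ ω, F₂ ω ∂μ = Dbreg h h' xeta xb := by
    rw [← integral_sub hint1 hint2, hintdiff]
    simp only [Dbreg, hxbgrad]
    rw [inner_sub_left, real_inner_smul_left]
    have e5 : ⟪f' xeta, xeta - xb⟫ = ⟪f' xeta, xeta - xb⟫ := rfl
    ring
  -- gradient cross term
  have hgradterm : η * ⟪f' xeta, xb - xeta⟫
      = -(Dbreg h h' xeta xb + Dbreg h h' xb xeta) := by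
    have e : η • f' xeta = h' xeta - h' xb := by rw [hxbgrad]; abel
    have e1 : η * ⟪f' xeta, xb - xeta⟫ = ⟪η • f' xeta, xb - xeta⟫ :=
      (real_inner_smul_left _ _ _).symm
    rw [e1, e]
    simp only [Dbreg]
    rw [inner_sub_left]
    have e2 : (xeta - xb) = -(xb - xeta) := by abel
    rw [e2, inner_neg_right]
    ring
  -- key inequality
  have hηL' : η * L ≤ 1 := by
    rw [← le_div_iff₀ hL] at *
    exact hηL
  have hkey : η * (f xstar - f xeta) + Dbreg h h' xeta xb ≤ 0 := by
    have hfs : f xb - f xeta - ⟪f' xeta, xb - xeta⟫ ≤ L * Dbreg h h' xb xeta := hsmooth xb xeta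
    have h3 := mul_le_mul_of_nonneg_left hfs hη.le
    have h4 := mul_le_mul_of_nonneg_left (hmin xb) hη.le
    have h5 : 0 ≤ (1 - η * L) * Dbreg h h' xb xeta :=
      mul_nonneg (by linarith) (Dnn xb xeta)
    nlinarith [hgradterm]
  -- final arithmetic
  rw [hfeta xeta]
  have hI : ∫ ω, F₁ ω ∂μ = ∫ ω, F₂ ω ∂μ + Dbreg h h' xeta xb := by linarith [hS]
  rw [hI]
  have hη2 : (0:ℝ) < η^2 := by positivity
  rw [div_le_iff₀ hη, ← sub_nonneg]
  have expand : 1/η^2 * (∫ ω, F₂ ω ∂μ) * η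
      - (f xstar - (f xeta - 1/η * ((∫ ω, F₂ ω ∂μ) + Dbreg h h' xeta xb)))
      = (-(η*(f xstar - f xeta) + Dbreg h h' xeta xb))/η := by
    field_simp
    ring
  rw [expand]
  exact div_nonneg (by linarith [hkey]) hη.le
end

section
/- Gradient control via the reversed Bregman divergence: if f is L-relatively smooth w.r.t. h and ∇f(x_⋆) = 0, then for all x, D_f(x_⋆, x) ≥ L·D_{h*}(∇h(x_⋆) + ∇f(x)/L, ∇h(x_⋆)), and the right-hand side is strictly positive whenever ∇f(x) ≠ 0 (equivalently x ≠ x_⋆ under strict convexity of h). -/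
open MeasureTheory
open scoped RealInnerProductSpace

section aux

variable {d : ℕ}

/-- derivative along a line of a function with gradient. -/
lemma aux_line_deriv (φ : EuclideanSpace ℝ (Fin d) → ℝ)
    (φ' : EuclideanSpace ℝ (Fin d) → EuclideanSpace ℝ (Fin d))
    (hφ : ∀ z, HasGradientAt φ (φ' z) z) (a v : EuclideanSpace ℝ (Fin d)) (t : ℝ) :
    HasDerivAt (fun s : ℝ => φ (a + s • v)) ⟪φ' (a + t • v), v⟫ t := by
  have hc : HasDerivAt (fun s : ℝ => a + s • v) v t := by
    simpa using ((hasDerivAt_id t).smul_const v).const_add a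
  have := (hφ (a + t • v)).hasFDerivAt.comp_hasDerivAt t hc
  simp only [InnerProductSpace.toDual_apply_apply] at this
  exact this

/-- convex gradient inequality. -/
lemma aux_grad_ineq (φ : EuclideanSpace ℝ (Fin d) → ℝ)
    (φ' : EuclideanSpace ℝ (Fin d) → EuclideanSpace ℝ (Fin d))
    (hc : ConvexOn ℝ Set.univ φ) (hφ : ∀ z, HasGradientAt φ (φ' z) z)
    (a b : EuclideanSpace ℝ (Fin d)) :
    φ a + ⟪φ' a, b - a⟫ ≤ φ b := by
  set g : ℝ → ℝ := fun s => φ (a + s • (b - a)) with hg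
  have hcomp : g = φ ∘ (AffineMap.lineMap a b) := by
    funext s; simp [hg, AffineMap.lineMap_apply, add_comm]
  have hgc : ConvexOn ℝ Set.univ g := by
    rw [hcomp]
    simpa using hc.comp_affineMap (AffineMap.lineMap a b)
  have hd0 : HasDerivAt g ⟪φ' a, b - a⟫ 0 := by
    have := aux_line_deriv φ φ' hφ a (b - a) 0
    simpa using this
  have hslope := hgc.le_slope_of_hasDerivAt (Set.mem_univ (0 : ℝ)) (Set.mem_univ (1 : ℝ))
    one_pos hd0
  have h01 : slope g 0 1 = g 1 - g 0 := by simp [slope_def_field]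
  have hg0 : g 0 = φ a := by simp [hg]
  have hg1 : g 1 = φ b := by simp [hg]
  rw [h01, hg0, hg1] at hslope
  linarith

/-- positive derivative gives a local increase. -/
lemma aux_pos_deriv (g : ℝ → ℝ) (c : ℝ) (hg : HasDerivAt g c 0) (hc : 0 < c) :
    ∃ t > (0 : ℝ), g 0 < g t := by
  have h := hasDerivAt_iff_tendsto_slope.mp hg
  have hev : ∀ᶠ t in nhdsWithin (0 : ℝ) {(0 : ℝ)}ᶜ, 0 < slope g 0 t :=
    h.eventually (eventually_gt_nhds hc)
  have hle : nhdsWithin (0 : ℝ) (Set.Ioi 0) ≤ nhdsWithin (0 : ℝ) {(0 : ℝ)}ᶜ :=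
    nhdsWithin_mono _ (fun t ht => ne_of_gt ht)
  have hev' : ∀ᶠ t in nhdsWithin (0 : ℝ) (Set.Ioi 0), 0 < slope g 0 t := hle hev
  obtain ⟨t, hts, ht⟩ := (hev'.and eventually_mem_nhdsWithin).exists
  refine ⟨t, ht, ?_⟩
  have hsl : slope g 0 t = (g t - g 0) / t := by simp [slope_def_field]
  rw [hsl] at hts
  have ht0 : (0 : ℝ) < t := ht
  have h2 := mul_pos hts ht0
  rw [div_mul_cancel₀ _ (ne_of_gt ht0)] at h2
  linarith

end aux

/-- gradient control via the reversed Bregman divergence. -/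
theorem grad_control_reversed_bregman {d : ℕ}
    (h hs f : EuclideanSpace ℝ (Fin d) → ℝ)
    (h' hs' f' : EuclideanSpace ℝ (Fin d) → EuclideanSpace ℝ (Fin d))
    (L : ℝ) (hL : 0 < L)
    (hconv : StrictConvexOn ℝ Set.univ h)
    (hgrad : ∀ z, HasGradientAt h (h' z) z)
    (hsgrad : ∀ y, HasGradientAt hs (hs' y) y)
    (hconj : ∀ y, hs y = ⨆ z, (⟪z, y⟫ - h z))
    (hinv : ∀ z, hs' (h' z) = z)
    (hfconv : ConvexOn ℝ Set.univ f)
    (hfgrad : ∀ z, HasGradientAt f (f' z) z)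
    (hsmooth : ∀ u v, Dbreg f f' u v ≤ L * Dbreg h h' u v)
    (xstar : EuclideanSpace ℝ (Fin d)) (hstar : f' xstar = 0) :
    ∀ x, L * Dbreg hs hs' (h' xstar + (1 / L) • f' x) (h' xstar) ≤ Dbreg f f' xstar x
      ∧ (f' x ≠ 0 → 0 < Dbreg hs hs' (h' xstar + (1 / L) • f' x) (h' xstar)) := by
  intro x
  have hLne : L ≠ 0 := ne_of_gt hL
  set q : EuclideanSpace ℝ (Fin d) := h' xstar with hq
  set p : EuclideanSpace ℝ (Fin d) := q + (1 / L) • f' x with hp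
  have hineq := aux_grad_ineq h h' hconv.convexOn hgrad
  have fineq := aux_grad_ineq f f' hfconv hfgrad
  -- value of hs at q
  have hbddq : ∀ z, ⟪z, q⟫ - h z ≤ ⟪xstar, q⟫ - h xstar := by
    intro z
    have h1 := hineq xstar z
    have e1 : ⟪q, z - xstar⟫ = ⟪q, z⟫ - ⟪q, xstar⟫ := inner_sub_right _ _ _
    have e2 : ⟪z, q⟫ = ⟪q, z⟫ := real_inner_comm _ _
    have e3 : ⟪xstar, q⟫ = ⟪q, xstar⟫ := real_inner_comm _ _
    rw [e1] at h1
    rw [e2, e3]; linarith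
  have hsq : hs q = ⟪xstar, q⟫ - h xstar := by
    rw [hconj q]
    apply le_antisymm (ciSup_le hbddq)
    exact le_ciSup ⟨_, Set.forall_mem_range.mpr hbddq⟩ xstar
  -- bound for hs at p
  set B : ℝ := (1 / L) * (⟪x, f' x⟫ - f x) + (1 / L) * f xstar - h xstar + ⟪q, xstar⟫ with hB
  have hbddp : ∀ u, ⟪u, p⟫ - h u ≤ B := by
    intro u
    have hsm := hsmooth u xstar
    simp only [Dbreg, hstar, inner_zero_left, sub_zero] at hsm
    have hf := fineq x u
    have e1 : ⟪q, u - xstar⟫ = ⟪q, u⟫ - ⟪q, xstar⟫ := inner_sub_right _ _ _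
    have e2 : ⟪f' x, u - x⟫ = ⟪f' x, u⟫ - ⟪f' x, x⟫ := inner_sub_right _ _ _
    have e3 : ⟪u, p⟫ = ⟪q, u⟫ + (1 / L) * ⟪f' x, u⟫ := by
      rw [hp, inner_add_right, real_inner_smul_right, real_inner_comm u q,
        real_inner_comm u (f' x)]
    have e4 : ⟪x, f' x⟫ = ⟪f' x, x⟫ := real_inner_comm _ _
    rw [e1] at hsm; rw [e2] at hf
    rw [e3, hB, e4]
    rw [show (⟪q, u⟫ + 1 / L * ⟪f' x, u⟫ - h u ≤
        1 / L * (⟪f' x, x⟫ - f x) + 1 / L * f xstar - h xstar + ⟪q, xstar⟫) ↔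
        (L * (⟪q, u⟫ + 1 / L * ⟪f' x, u⟫ - h u) ≤
        L * (1 / L * (⟪f' x, x⟫ - f x) + 1 / L * f xstar - h xstar + ⟪q, xstar⟫))
      from (mul_le_mul_iff_right₀ hL).symm]
    have eL : L * (⟪q, u⟫ + 1 / L * ⟪f' x, u⟫ - h u) =
        L * ⟪q, u⟫ + ⟪f' x, u⟫ - L * h u := by field_simp
    have eR : L * (1 / L * (⟪f' x, x⟫ - f x) + 1 / L * f xstar - h xstar + ⟪q, xstar⟫) =
        ⟪f' x, x⟫ - f x + f xstar - L * h xstar + L * ⟪q, xstar⟫ := by field_simp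
    rw [eL, eR]
    nlinarith [hsm, hf]
  have hsple : hs p ≤ B := by rw [hconj p]; exact ciSup_le hbddp
  have hspge : ∀ u, ⟪u, p⟫ - h u ≤ hs p := by
    intro u
    rw [hconj p]
    exact le_ciSup ⟨_, Set.forall_mem_range.mpr hbddp⟩ u
  -- simplify the Bregman divergence of hs
  have hpq : p - q = (1 / L) • f' x := by rw [hp]; abel
  have hDhs : Dbreg hs hs' p q = hs p - hs q - (1 / L) * ⟪xstar, f' x⟫ := by
    have h1 : hs' q = xstar := hinv xstar
    rw [Dbreg, h1, hpq, real_inner_smul_right]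
  constructor
  · -- main inequality
    have eD : Dbreg f f' xstar x = f xstar - f x - ⟪f' x, xstar⟫ + ⟪f' x, x⟫ := by
      simp [Dbreg, inner_sub_right]; ring
    rw [hDhs, hsq, eD]
    have e3 : ⟪xstar, f' x⟫ = ⟪f' x, xstar⟫ := real_inner_comm _ _
    have e4 : ⟪x, f' x⟫ = ⟪f' x, x⟫ := real_inner_comm _ _
    have e5 : ⟪xstar, q⟫ = ⟪q, xstar⟫ := real_inner_comm _ _
    have expand2 : L * (hs p - (⟪xstar, q⟫ - h xstar) - 1 / L * ⟪xstar, f' x⟫) =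
        L * hs p - L * ⟪xstar, q⟫ + L * h xstar - ⟪xstar, f' x⟫ := by
      field_simp; ring
    have expand3 : L * B = ⟪x, f' x⟫ - f x + f xstar - L * h xstar + L * ⟪q, xstar⟫ := by
      rw [hB]; field_simp
    have hmul : L * hs p ≤ L * B := mul_le_mul_of_nonneg_left hsple hL.le
    rw [expand3] at hmul
    rw [expand2, e3, e4, e5] at *
    linarith
  · -- strict positivity
    intro hfx
    set v : EuclideanSpace ℝ (Fin d) := (1 / L) • f' x with hv
    have hvne : v ≠ 0 := by
      simp only [hv, smul_ne_zero_iff]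
      exact ⟨by positivity, hfx⟩
    set g : ℝ → ℝ := fun t => ⟪xstar + t • v, p⟫ - h (xstar + t • v) with hgdef
    have hg1 : HasDerivAt (fun t : ℝ => ⟪xstar + t • v, p⟫) ⟪v, p⟫ 0 := by
      have heq : (fun t : ℝ => ⟪xstar + t • v, p⟫) = fun t : ℝ => ⟪xstar, p⟫ + t * ⟪v, p⟫ := by
        funext t; rw [inner_add_left, real_inner_smul_left]
      rw [heq]
      simpa using ((hasDerivAt_id (0 : ℝ)).mul_const ⟪v, p⟫).const_add ⟪xstar, p⟫
    have hg2 : HasDerivAt (fun t : ℝ => h (xstar + t • v)) ⟪q, v⟫ 0 := by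
      have := aux_line_deriv h h' hgrad xstar v 0
      simpa [hq] using this
    have hgd : HasDerivAt g (⟪v, p⟫ - ⟪q, v⟫) 0 := hg1.sub hg2
    have hderpos : 0 < ⟪v, p⟫ - ⟪q, v⟫ := by
      have e1 : ⟪v, p⟫ = ⟪v, q⟫ + ⟪v, v⟫ := by
        rw [hp, inner_add_right]
      have e2 : ⟪q, v⟫ = ⟪v, q⟫ := real_inner_comm _ _
      have e6 : (0 : ℝ) < ⟪v, v⟫ := by
        rw [real_inner_self_eq_norm_sq]
        exact pow_pos (norm_pos_iff.mpr hvne) 2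
      rw [e1, e2]
      linarith
    obtain ⟨t, ht, hgt⟩ := aux_pos_deriv g _ hgd hderpos
    have hg0 : g 0 = ⟪xstar, p⟫ - h xstar := by simp [hgdef]
    have hsp_gt : ⟪xstar, p⟫ - h xstar < hs p := by
      calc ⟪xstar, p⟫ - h xstar = g 0 := hg0.symm
        _ < g t := hgt
        _ ≤ hs p := hspge _
    rw [hDhs, hsq]
    have e5 : ⟪xstar, p⟫ = ⟪xstar, q⟫ + (1 / L) * ⟪xstar, f' x⟫ := by
      rw [hp, inner_add_right, hv, real_inner_smul_right]
    rw [e5] at hsp_gt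
    linarith
end

section
/- Lower bound on the minimizing variance Σ²_η: let X ~ N(m_⋆, Σ²_⋆) and suppose (m_η, Σ²_η) satisfies the stationarity conditions E[(m_η - X)/(Σ²_η + η(m_η - X)²)] = 0 and E[(m_η - X)²/(Σ²_η + η(m_η - X)²)] = 1. Then m_η = m_⋆ and, for η < 1/3, (1 - 3η)·Σ²_⋆ ≤ Σ²_η ≤ Σ²_⋆. -/
open MeasureTheory ProbabilityTheory

open Real
open scoped ENNReal NNReal

-- transfer lemma
lemma integral_gaussianReal' (μ : ℝ) {v : NNReal} (hv : v ≠ 0) (g : ℝ → ℝ) :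
    ∫ x, g x ∂(gaussianReal μ v) = ∫ x, gaussianPDFReal μ v x * g x := by
  rw [gaussianReal_of_var_ne_zero _ hv]
  have h1 : (gaussianPDF μ v) = fun x => ((gaussianPDFReal μ v x).toNNReal : ℝ≥0∞) := by
    ext x; simp [gaussianPDF, ENNReal.ofReal]
  rw [h1, integral_withDensity_eq_integral_smul
    ((measurable_gaussianPDFReal μ v).real_toNNReal) g]
  congr 1; ext x
  simp [NNReal.smul_def, Real.coe_toNNReal _ (gaussianPDFReal_nonneg μ v x)]

lemma integrable_gaussianReal_iff (μ : ℝ) {v : NNReal} (hv : v ≠ 0) (g : ℝ → ℝ) :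
    Integrable g (gaussianReal μ v) ↔
      Integrable (fun x => gaussianPDFReal μ v x * g x) volume := by
  rw [gaussianReal_of_var_ne_zero _ hv]
  have h1 : (gaussianPDF μ v) = fun x => ((gaussianPDFReal μ v x).toNNReal : ℝ≥0∞) := by
    ext x; simp [gaussianPDF, ENNReal.ofReal]
  rw [h1, integrable_withDensity_iff_integrable_smul
    ((measurable_gaussianPDFReal μ v).real_toNNReal)]
  constructor <;> intro h <;> [skip; skip] <;>
  · refine h.congr (Filter.Eventually.of_forall fun x => ?_)
    simp [NNReal.smul_def, Real.coe_toNNReal _ (gaussianPDFReal_nonneg μ v x)]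


lemma gaussianPDFReal_zero_eq {v : NNReal} (x : ℝ) :
    gaussianPDFReal 0 v x
      = (Real.sqrt (2 * Real.pi * v))⁻¹ * Real.exp (-(2 * (v:ℝ))⁻¹ * x ^ 2) := by
  rw [gaussianPDFReal]
  ring_nf

lemma integrable_pow_mul_gaussianPDFReal {v : NNReal} (hv : 0 < (v : ℝ)) (n : ℕ) :
    Integrable (fun x : ℝ => x ^ n * gaussianPDFReal 0 v x) := by
  have hb : 0 < (2 * (v : ℝ))⁻¹ := by positivity
  have h := (integrable_rpow_mul_exp_neg_mul_sq hb (s := (n : ℝ))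
    (by exact_mod_cast neg_one_lt_zero.trans_le (Nat.cast_nonneg n))).const_mul
    (Real.sqrt (2 * Real.pi * v))⁻¹
  refine h.congr (Filter.Eventually.of_forall fun x => ?_)
  simp only [gaussianPDFReal_zero_eq, Real.rpow_natCast]
  ring

lemma hasDerivAt_gaussianPDFReal {v : NNReal} (hv : 0 < (v : ℝ)) (x : ℝ) :
    HasDerivAt (gaussianPDFReal 0 v)
      (-(x / v) * gaussianPDFReal 0 v x) x := by
  have h1 : HasDerivAt (fun x : ℝ => -(2 * (v:ℝ))⁻¹ * x ^ 2)
      (-(2 * (v:ℝ))⁻¹ * (2 * x)) x := by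
    simpa using ((hasDerivAt_pow 2 x).const_mul (-(2 * (v:ℝ))⁻¹))
  have h2 := (h1.exp).const_mul (Real.sqrt (2 * Real.pi * v))⁻¹
  have heq : (fun x : ℝ => (Real.sqrt (2 * Real.pi * v))⁻¹
      * Real.exp (-(2 * (v:ℝ))⁻¹ * x ^ 2)) = gaussianPDFReal 0 v := by
    funext y; rw [gaussianPDFReal_zero_eq]
  rw [heq] at h2
  refine h2.congr_deriv ?_
  rw [gaussianPDFReal_zero_eq]
  field_simp

lemma integral_sq_gaussianPDFReal {v : NNReal} (hv : 0 < (v : ℝ)) :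
    ∫ x : ℝ, x ^ 2 * gaussianPDFReal 0 v x = v := by
  set φ := gaussianPDFReal 0 v with hφ
  have hd : ∀ x : ℝ, HasDerivAt (fun x => x * φ x)
      (φ x - x ^ 2 / v * φ x) x := by
    intro x
    have := (hasDerivAt_id x).mul (hasDerivAt_gaussianPDFReal hv x)
    refine this.congr_deriv ?_
    field_simp
    rw [hφ]; simp only [id]; ring
  have hint0 : Integrable φ := integrable_gaussianPDFReal 0 v
  have hint2 : Integrable (fun x : ℝ => x ^ 2 * φ x) :=
    integrable_pow_mul_gaussianPDFReal hv 2
  have hint1 : Integrable (fun x : ℝ => x * φ x) := by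
    simpa using integrable_pow_mul_gaussianPDFReal hv 1
  have hder : Integrable (fun x : ℝ => φ x - x ^ 2 / v * φ x) := by
    refine hint0.sub ?_
    refine (hint2.div_const (v : ℝ)).congr (Filter.Eventually.of_forall fun x => ?_)
    ring
  have h0 := integral_eq_zero_of_hasDerivAt_of_integrable hd hder hint1
  rw [integral_sub hint0 (by
    refine (hint2.div_const (v : ℝ)).congr (Filter.Eventually.of_forall fun x => ?_)
    ring)] at h0
  have hφ1 : ∫ x, φ x = 1 := integral_gaussianPDFReal_eq_one 0 (by exact_mod_cast hv.ne')
  have : ∫ x : ℝ, x ^ 2 / v * φ x = (∫ x : ℝ, x ^ 2 * φ x) / v := by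
    rw [← integral_div]
    congr 1; funext x; ring
  rw [hφ1, this] at h0
  field_simp at h0
  linarith

lemma integral_pow4_gaussianPDFReal {v : NNReal} (hv : 0 < (v : ℝ)) :
    ∫ x : ℝ, x ^ 4 * gaussianPDFReal 0 v x = 3 * (v : ℝ) ^ 2 := by
  set φ := gaussianPDFReal 0 v with hφ
  have hd : ∀ x : ℝ, HasDerivAt (fun x => x ^ 3 * φ x)
      (3 * x ^ 2 * φ x - x ^ 4 / v * φ x) x := by
    intro x
    have := (hasDerivAt_pow 3 x).mul (hasDerivAt_gaussianPDFReal hv x)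
    refine this.congr_deriv ?_
    field_simp
    ring
  have hint2 : Integrable (fun x : ℝ => x ^ 2 * φ x) :=
    integrable_pow_mul_gaussianPDFReal hv 2
  have hint4 : Integrable (fun x : ℝ => x ^ 4 * φ x) :=
    integrable_pow_mul_gaussianPDFReal hv 4
  have hint3 : Integrable (fun x : ℝ => x ^ 3 * φ x) :=
    integrable_pow_mul_gaussianPDFReal hv 3
  have hR : Integrable (fun x : ℝ => x ^ 4 / v * φ x) := by
    refine (hint4.div_const (v : ℝ)).congr (Filter.Eventually.of_forall fun x => ?_)
    ring
  have hder : Integrable (fun x : ℝ => 3 * x ^ 2 * φ x - x ^ 4 / v * φ x) := by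
    refine Integrable.sub ?_ hR
    refine (hint2.const_mul 3).congr (Filter.Eventually.of_forall fun x => ?_)
    ring
  have h0 := integral_eq_zero_of_hasDerivAt_of_integrable hd hder hint3
  rw [integral_sub (by
      refine (hint2.const_mul 3).congr (Filter.Eventually.of_forall fun x => ?_)
      ring) hR] at h0
  have e1 : ∫ x : ℝ, 3 * x ^ 2 * φ x = 3 * ∫ x : ℝ, x ^ 2 * φ x := by
    rw [← integral_const_mul]
    congr 1; funext x; ring
  have e2 : ∫ x : ℝ, x ^ 4 / v * φ x = (∫ x : ℝ, x ^ 4 * φ x) / v := by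
    rw [← integral_div]
    congr 1; funext x; ring
  rw [e1, e2, integral_sq_gaussianPDFReal hv] at h0
  field_simp at h0
  linarith

lemma gaussianPDFReal_neg_arg {v : NNReal} (δ x : ℝ) :
    gaussianPDFReal δ v (-x) = gaussianPDFReal (-δ) v x := by
  rw [gaussianPDFReal, gaussianPDFReal]
  ring_nf

lemma abs_h_le {s η : ℝ} (hs : 0 < s) (hη : 0 < η) (y : ℝ) :
    |y / (s + η * y ^ 2)| ≤ (2 * Real.sqrt (s * η))⁻¹ := by
  have hden : 0 < s + η * y ^ 2 := by positivity
  have hsq : 0 < Real.sqrt (s * η) := Real.sqrt_pos.2 (by positivity)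
  rw [abs_div, abs_of_pos hden, div_le_iff₀ hden, inv_mul_eq_div, le_div_iff₀ (by positivity)]
  have h1 : Real.sqrt s * Real.sqrt η = Real.sqrt (s * η) := (Real.sqrt_mul hs.le η).symm
  have h2 : Real.sqrt s ^ 2 = s := Real.sq_sqrt hs.le
  have h3 : Real.sqrt η ^ 2 = η := Real.sq_sqrt hη.le
  nlinarith [sq_nonneg (Real.sqrt s - Real.sqrt η * |y|), abs_nonneg y, sq_abs y,
    Real.sqrt_nonneg s, Real.sqrt_nonneg η]

lemma h_continuous {s η : ℝ} (hs : 0 < s) (hη : 0 < η) :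
    Continuous (fun y : ℝ => y / (s + η * y ^ 2)) := by
  refine continuous_id.div (by fun_prop) fun y => ?_
  positivity

lemma integrable_h_mul_pdf {s η : ℝ} (hs : 0 < s) (hη : 0 < η) (δ : ℝ) (v : NNReal) :
    Integrable (fun y : ℝ => y / (s + η * y ^ 2) * gaussianPDFReal δ v y) := by
  refine Integrable.bdd_mul (integrable_gaussianPDFReal δ v)
    (h_continuous hs hη).aestronglyMeasurable (c := (2 * Real.sqrt (s * η))⁻¹) (Filter.Eventually.of_forall fun y => ?_)
  rw [Real.norm_eq_abs]; exact abs_h_le hs hη y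

lemma integral_h_pos {s η : ℝ} (hs : 0 < s) (hη : 0 < η) {v : NNReal} (hv : 0 < (v : ℝ))
    {δ : ℝ} (hδ : 0 < δ) :
    0 < ∫ y : ℝ, y / (s + η * y ^ 2) * gaussianPDFReal δ v y := by
  set F := fun y : ℝ => y / (s + η * y ^ 2) * gaussianPDFReal δ v y with hF
  have hFi : Integrable F := integrable_h_mul_pdf hs hη δ v
  have hGi : Integrable (fun y : ℝ => y / (s + η * y ^ 2) * gaussianPDFReal (-δ) v y) :=
    integrable_h_mul_pdf hs hη (-δ) v
  -- split the integral
  have hsplit : ∫ y, F y = (∫ y in Set.Iic 0, F y) + ∫ y in Set.Ioi 0, F y := by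
    rw [← setIntegral_union (Set.Iic_disjoint_Ioi le_rfl) measurableSet_Ioi
      hFi.integrableOn hFi.integrableOn, Set.Iic_union_Ioi, setIntegral_univ]
  have hneg : ∫ y in Set.Iic 0, F y
      = ∫ y in Set.Ioi 0, -(y / (s + η * y ^ 2) * gaussianPDFReal (-δ) v y) := by
    have h1 := integral_comp_neg_Iic (0:ℝ) (fun y => F (-y))
    simp only [neg_neg, neg_zero] at h1
    rw [h1]
    refine setIntegral_congr_fun measurableSet_Ioi fun y _ => ?_
    rw [hF]
    simp only [gaussianPDFReal_neg_arg, neg_sq, neg_div, neg_mul]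
  rw [hsplit, hneg, integral_neg, ← sub_eq_neg_add]
  rw [← integral_sub hFi.integrableOn hGi.integrableOn]
  have hkey : ∀ y ∈ Set.Ioi (0:ℝ),
      0 < F y - y / (s + η * y ^ 2) * gaussianPDFReal (-δ) v y := by
    intro y hy
    have hy0 : 0 < y := hy
    have hpdf : gaussianPDFReal (-δ) v y < gaussianPDFReal δ v y := by
      rw [gaussianPDFReal, gaussianPDFReal]
      have hC : (0:ℝ) < (Real.sqrt (2 * Real.pi * v))⁻¹ := by positivity
      refine mul_lt_mul_of_pos_left (Real.exp_lt_exp.2 ?_) hC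
      rw [div_lt_div_iff₀ (by positivity) (by positivity)]
      nlinarith [mul_pos (mul_pos hy0 hδ) (show (0:ℝ) < (v:ℝ) from hv)]
    have hh : 0 < y / (s + η * y ^ 2) := by positivity
    rw [hF]
    nlinarith
  refine (setIntegral_pos_iff_support_of_nonneg_ae ?_ ?_).2 ?_
  · rw [Filter.EventuallyLE, ae_restrict_iff' measurableSet_Ioi]
    exact Filter.Eventually.of_forall fun y hy => (hkey y hy).le
  · exact (hFi.sub hGi).integrableOn
  · refine lt_of_lt_of_le ?_ (measure_mono (Set.subset_inter (fun y hy => ?_) le_rfl))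
    · rw [Real.volume_Ioi]; exact ENNReal.zero_lt_top
    · exact Function.mem_support.2 (hkey y hy).ne'

lemma law_sub {Ω : Type*} [MeasurableSpace Ω] (P : Measure Ω) [IsProbabilityMeasure P]
    (X : Ω → ℝ) (hX : Measurable X) (mstar : ℝ) (v : NNReal)
    (hlaw : P.map X = gaussianReal mstar v) (m_eta : ℝ) :
    P.map (fun ω => m_eta - X ω) = gaussianReal (m_eta - mstar) v := by
  have h1 : (fun ω => m_eta - X ω)
      = (fun x : ℝ => m_eta + x) ∘ (fun x : ℝ => (-1) * x) ∘ X := by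
    funext ω; simp [Function.comp]; ring
  rw [h1, ← Measure.map_map (by fun_prop) (by fun_prop),
    ← Measure.map_map (by fun_prop) hX, hlaw]
  rw [show (fun x : ℝ => (-1:ℝ) * x) = ((-1:ℝ) * ·) from rfl,
    gaussianReal_map_const_mul,
    show (fun x : ℝ => m_eta + x) = (m_eta + ·) from rfl,
    gaussianReal_map_const_add]
  congr 1
  · ring
  · ext
    norm_num

lemma q_bdd {s η : ℝ} (hs : 0 < s) (hη : 0 < η) (x : ℝ) :
    |x ^ 2 / (s + η * x ^ 2)| ≤ η⁻¹ := by
  have hden : 0 < s + η * x ^ 2 := by positivity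
  rw [abs_of_nonneg (by positivity), div_le_iff₀ hden, inv_mul_eq_div,
    le_div_iff₀ hη]
  nlinarith [sq_nonneg x]

lemma q_continuous {s η : ℝ} (hs : 0 < s) (hη : 0 < η) :
    Continuous (fun x : ℝ => x ^ 2 / (s + η * x ^ 2)) := by
  refine (continuous_pow 2).div (by fun_prop) fun x => ?_
  positivity

/-- lower and upper bounds on the variance `Σ²_η` of the minimizer of
`f_η` for a Gaussian with mean `m⋆` and variance `Σ²⋆ = v`: the stationarity
conditions force `m_η = m⋆` and, for `η < 1/3`, `(1 - 3η)Σ²⋆ ≤ Σ²_η ≤ Σ²⋆`. -/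
theorem gaussian_minimizer_variance_bounds {Ω : Type*} [MeasurableSpace Ω]
    (P : Measure Ω) [IsProbabilityMeasure P]
    (X : Ω → ℝ) (hX : Measurable X)
    (mstar : ℝ) (v : NNReal) (hv : 0 < (v : ℝ))
    (hlaw : P.map X = gaussianReal mstar v)
    (η m_eta s2eta : ℝ) (hη0 : 0 < η) (hη : η < 1 / 3) (hs2 : 0 < s2eta)
    (hstat1 : ∫ ω, (m_eta - X ω) / (s2eta + η * (m_eta - X ω) ^ 2) ∂P = 0)
    (hstat2 : ∫ ω, (m_eta - X ω) ^ 2 / (s2eta + η * (m_eta - X ω) ^ 2) ∂P = 1) :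
    m_eta = mstar ∧ (1 - 3 * η) * (v : ℝ) ≤ s2eta ∧ s2eta ≤ (v : ℝ) := by
  have hv' : v ≠ 0 := by exact_mod_cast hv.ne'
  have key : ∀ g : ℝ → ℝ, Continuous g →
      ∫ ω, g (m_eta - X ω) ∂P = ∫ x, g x ∂(gaussianReal (m_eta - mstar) v) := by
    intro g hg
    rw [← law_sub P X hX mstar v hlaw m_eta,
      integral_map (by fun_prop) hg.aestronglyMeasurable]
  -- step 1 : m_eta = mstar
  have hstat1' : ∫ x, x / (s2eta + η * x ^ 2)
      * gaussianPDFReal (m_eta - mstar) v x = 0 := by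
    rw [← hstat1, key _ (h_continuous hs2 hη0),
      integral_gaussianReal' _ hv']
    simp_rw [mul_comm]
  have hmeta : m_eta = mstar := by
    rcases lt_trichotomy (m_eta - mstar) 0 with hlt | heq | hgt
    · exfalso
      have hflip : ∫ x, x / (s2eta + η * x ^ 2) * gaussianPDFReal (m_eta - mstar) v x
          = - ∫ x, x / (s2eta + η * x ^ 2)
              * gaussianPDFReal (-(m_eta - mstar)) v x := by
        rw [← integral_neg, ← integral_neg_eq_self (fun x => x / (s2eta + η * x ^ 2)
          * gaussianPDFReal (m_eta - mstar) v x)]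
        congr 1; funext x
        simp only [gaussianPDFReal_neg_arg, neg_sq, neg_div, neg_mul]
      rw [hflip] at hstat1'
      have := integral_h_pos hs2 hη0 hv (neg_pos.2 hlt)
      linarith
    · linarith
    · exfalso
      have := integral_h_pos hs2 hη0 hv hgt
      linarith
  subst hmeta
  simp only [sub_self] at key
  refine ⟨rfl, ?_, ?_⟩
  · -- lower bound via Cauchy-Schwarz on gaussianReal 0 v
    set γ := gaussianReal 0 (v : NNReal) with hγ
    have hstat2' : ∫ x, x ^ 2 / (s2eta + η * x ^ 2) ∂γ = 1 := by
      rw [← hstat2, key _ (q_continuous hs2 hη0)]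
    set f := fun x : ℝ => |x| / Real.sqrt (s2eta + η * x ^ 2) with hf
    set g := fun x : ℝ => |x| * Real.sqrt (s2eta + η * x ^ 2) with hg
    have hden : ∀ x : ℝ, 0 < s2eta + η * x ^ 2 := fun x => by positivity
    have hsq : ∀ x : ℝ, Real.sqrt (s2eta + η * x ^ 2) ^ 2 = s2eta + η * x ^ 2 :=
      fun x => Real.sq_sqrt (hden x).le
    have hsqpos : ∀ x : ℝ, 0 < Real.sqrt (s2eta + η * x ^ 2) :=
      fun x => Real.sqrt_pos.2 (hden x)
    have hf2 : ∀ x, f x ^ 2 = x ^ 2 / (s2eta + η * x ^ 2) := by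
      intro x; rw [hf, div_pow, sq_abs, hsq]
    have hg2 : ∀ x, g x ^ 2 = x ^ 2 * (s2eta + η * x ^ 2) := by
      intro x; rw [hg, mul_pow, sq_abs, hsq]
    have hfg : ∀ x, f x * g x = x ^ 2 := by
      intro x
      have hne : Real.sqrt (s2eta + η * x ^ 2) ≠ 0 := (hsqpos x).ne'
      rw [hf, hg, div_mul_eq_mul_div,
        show |x| * (|x| * Real.sqrt (s2eta + η * x ^ 2))
            = x ^ 2 * Real.sqrt (s2eta + η * x ^ 2) from by
          rw [← mul_assoc, ← sq_abs]; ring,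
        mul_div_assoc, div_self hne, mul_one]
    have hfc : Continuous f := by
      refine continuous_abs.div (by fun_prop) fun x => (hsqpos x).ne'
    have hgc : Continuous g := continuous_abs.mul (by fun_prop)
    have hif2 : Integrable (fun x => f x ^ 2) γ := by
      rw [hγ, integrable_gaussianReal_iff _ hv']
      simp_rw [mul_comm (gaussianPDFReal 0 v _)]
      refine Integrable.bdd_mul (integrable_gaussianPDFReal 0 v)
        ((hfc.pow 2).aestronglyMeasurable) (c := η⁻¹) (Filter.Eventually.of_forall fun x => ?_)
      rw [Real.norm_eq_abs, hf2]
      exact q_bdd hs2 hη0 x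
    have hig2 : Integrable (fun x => g x ^ 2) γ := by
      rw [hγ, integrable_gaussianReal_iff _ hv']
      refine Integrable.congr (f := fun x : ℝ =>
          s2eta * (x ^ 2 * gaussianPDFReal 0 v x) + η * (x ^ 4 * gaussianPDFReal 0 v x))
        (((integrable_pow_mul_gaussianPDFReal hv 2).const_mul s2eta).add
          ((integrable_pow_mul_gaussianPDFReal hv 4).const_mul η))
        (Filter.Eventually.of_forall fun x => ?_)
      simp only [hg2]; ring
    have hmf : MemLp f (ENNReal.ofReal 2) γ := by
      rw [ENNReal.ofReal_ofNat]
      exact (memLp_two_iff_integrable_sq hfc.aestronglyMeasurable).2 hif2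
    have hmg : MemLp g (ENNReal.ofReal 2) γ := by
      rw [ENNReal.ofReal_ofNat]
      exact (memLp_two_iff_integrable_sq hgc.aestronglyMeasurable).2 hig2
    have hcs := integral_mul_le_Lp_mul_Lq_of_nonneg (μ := γ) (p := 2) (q := 2) (f := f) (g := g)
      Real.HolderConjugate.two_two
      (Filter.Eventually.of_forall fun x =>
        div_nonneg (abs_nonneg x) (Real.sqrt_nonneg _))
      (Filter.Eventually.of_forall fun x =>
        mul_nonneg (abs_nonneg x) (Real.sqrt_nonneg _)) hmf hmg
    simp_rw [hfg] at hcs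
    have hM2 : ∫ x, x ^ 2 ∂γ = (v : ℝ) := by
      rw [hγ, integral_gaussianReal' _ hv']
      simp_rw [mul_comm]
      exact integral_sq_gaussianPDFReal hv
    have hrpow2 : ∀ y : ℝ, y ^ (2:ℝ) = y ^ 2 := fun y => Real.rpow_two y
    have hf2int : ∫ x, f x ^ (2:ℝ) ∂γ = 1 := by
      simp_rw [hrpow2, hf2]
      exact hstat2'
    have hg2int : ∫ x, g x ^ (2:ℝ) ∂γ
        = s2eta * (v : ℝ) + η * (3 * (v : ℝ) ^ 2) := by
      simp_rw [hrpow2, hg2]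
      rw [hγ, integral_gaussianReal' _ hv']
      have heqf : (fun x : ℝ => gaussianPDFReal 0 v x * (x ^ 2 * (s2eta + η * x ^ 2)))
          = fun x : ℝ => s2eta * (x ^ 2 * gaussianPDFReal 0 v x)
            + η * (x ^ 4 * gaussianPDFReal 0 v x) := funext fun x => by ring
      rw [heqf, integral_add (((integrable_pow_mul_gaussianPDFReal hv 2).const_mul s2eta))
        (((integrable_pow_mul_gaussianPDFReal hv 4).const_mul η)),
        integral_const_mul, integral_const_mul,
        integral_sq_gaussianPDFReal hv, integral_pow4_gaussianPDFReal hv]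
    rw [hM2, hf2int, hg2int, Real.one_rpow, one_mul] at hcs
    set w := s2eta * (v : ℝ) + η * (3 * (v : ℝ) ^ 2) with hw
    have hw0 : 0 ≤ w := by positivity
    have hcs' : (v : ℝ) ≤ Real.sqrt w := by
      rw [Real.sqrt_eq_rpow]
      exact hcs
    have hsq' : (v : ℝ) ^ 2 ≤ w := by
      have := pow_le_pow_left₀ hv.le hcs' 2
      rwa [Real.sq_sqrt hw0] at this
    rw [hw] at hsq'
    nlinarith [hv]
  · -- upper bound
    have hstat2'' : ∫ x, x ^ 2 / (s2eta + η * x ^ 2)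
        * gaussianPDFReal 0 v x = 1 := by
      rw [← hstat2, key _ (q_continuous hs2 hη0), integral_gaussianReal' _ hv']
      simp_rw [mul_comm]
    have hI1 : Integrable (fun x : ℝ => x ^ 2 / (s2eta + η * x ^ 2)
        * gaussianPDFReal 0 v x) := by
      refine Integrable.bdd_mul (integrable_gaussianPDFReal 0 v)
        (q_continuous hs2 hη0).aestronglyMeasurable (c := η⁻¹) (Filter.Eventually.of_forall fun x => ?_)
      rw [Real.norm_eq_abs]; exact q_bdd hs2 hη0 x
    have hI2 : Integrable (fun x : ℝ => x ^ 2 / s2eta * gaussianPDFReal 0 v x) := by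
      refine ((integrable_pow_mul_gaussianPDFReal hv 2).div_const s2eta).congr
        (Filter.Eventually.of_forall fun x => ?_)
      ring
    have hmono : ∫ x, x ^ 2 / (s2eta + η * x ^ 2) * gaussianPDFReal 0 v x
        ≤ ∫ x, x ^ 2 / s2eta * gaussianPDFReal 0 v x := by
      refine integral_mono hI1 hI2 fun x => ?_
      have h1 : x ^ 2 / (s2eta + η * x ^ 2) ≤ x ^ 2 / s2eta := by
        gcongr
        nlinarith [sq_nonneg x]
      exact mul_le_mul_of_nonneg_right h1 (gaussianPDFReal_nonneg 0 v x)
    have hval : ∫ x, x ^ 2 / s2eta * gaussianPDFReal 0 v x = (v : ℝ) / s2eta := by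
      have heqf : (fun x : ℝ => x ^ 2 / s2eta * gaussianPDFReal 0 v x)
          = fun x : ℝ => (x ^ 2 * gaussianPDFReal 0 v x) / s2eta := by funext x; ring
      rw [heqf, integral_div, integral_sq_gaussianPDFReal hv]
    rw [hstat2'', hval] at hmono
    rw [le_div_iff₀ hs2, one_mul] at hmono
    linarith
end

section
/- Nonnegativity of the correction term at the stationary point: if X ~ N(m_⋆, Σ²_⋆), η ∈ (0,1), and (m_η, Σ²_η) satisfies E[Σ²_η/(Σ²_η + η(m_η - X)²)] = 1 - η, then E[log((1-η)(1 + η(m_η - X)²/Σ²_η))] ≥ 0. -/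
open MeasureTheory ProbabilityTheory

/-- nonnegativity of the correction term at the stationary point:
if `X ~ N(m⋆, Σ²⋆)`, `η ∈ (0,1)`, and `E[Σ²_η/(Σ²_η + η(m_η - X)²)] = 1 - η`, then
`E[log((1-η)(1 + η(m_η - X)²/Σ²_η))] ≥ 0`. -/
theorem gaussian_correction_nonneg {Ω : Type*} [MeasurableSpace Ω]
    (P : Measure Ω) [IsProbabilityMeasure P]
    (X : Ω → ℝ) (hX : Measurable X)
    (mstar : ℝ) (v : NNReal) (hv : 0 < (v : ℝ))
    (hlaw : P.map X = gaussianReal mstar v)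
    (η m_eta s2eta : ℝ) (hη0 : 0 < η) (hη1 : η < 1) (hs2 : 0 < s2eta)
    (hstat : ∫ ω, s2eta / (s2eta + η * (m_eta - X ω) ^ 2) ∂P = 1 - η) :
    0 ≤ ∫ ω, Real.log ((1 - η) * (1 + η * (m_eta - X ω) ^ 2 / s2eta)) ∂P := by
  have hη1' : 0 < 1 - η := by linarith
  set h : Ω → ℝ := fun ω => s2eta / (s2eta + η * (m_eta - X ω) ^ 2) with hhdef
  have hden : ∀ ω, 0 < s2eta + η * (m_eta - X ω) ^ 2 := fun ω => by positivity
  have hmeas : Measurable h := by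
    apply measurable_const.div
    exact measurable_const.add (((measurable_const.sub hX).pow_const 2).const_mul η)
  have hbound : ∀ ω, ‖h ω‖ ≤ 1 := by
    intro ω
    rw [Real.norm_eq_abs, abs_of_pos (div_pos hs2 (hden ω))]
    rw [div_le_one (hden ω)]
    nlinarith [sq_nonneg (m_eta - X ω)]
  have hint_h : Integrable h P :=
    Integrable.mono' (integrable_const 1) hmeas.aestronglyMeasurable
      (Filter.Eventually.of_forall hbound)
  set g : Ω → ℝ := fun ω => 1 - (1 / (1 - η)) * h ω with hgdef
  have hint_g : Integrable g P := (integrable_const 1).sub (hint_h.const_mul _)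
  have hg_int : ∫ ω, g ω ∂P = 0 := by
    rw [hgdef]
    rw [integral_sub (integrable_const 1) (hint_h.const_mul _)]
    rw [integral_const_mul, integral_const]
    simp only [measure_univ, ENNReal.toReal_one, smul_eq_mul, one_mul, probReal_univ]
    rw [hstat]
    field_simp
    ring
  have hpt : ∀ ω, g ω ≤ Real.log ((1 - η) * (1 + η * (m_eta - X ω) ^ 2 / s2eta)) := by
    intro ω
    set d := m_eta - X ω
    have h1 : (0:ℝ) < 1 + η * d ^ 2 / s2eta := by positivity
    have hy : (0:ℝ) < (1 - η) * (1 + η * d ^ 2 / s2eta) := mul_pos hη1' h1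
    have hlog : 1 - ((1 - η) * (1 + η * d ^ 2 / s2eta))⁻¹ ≤
        Real.log ((1 - η) * (1 + η * d ^ 2 / s2eta)) := by
      have := Real.log_le_sub_one_of_pos (inv_pos.mpr hy)
      rw [Real.log_inv] at this
      linarith
    have hinv : ((1 - η) * (1 + η * d ^ 2 / s2eta))⁻¹ = (1 / (1 - η)) * h ω := by
      rw [hhdef]
      have : s2eta + η * (m_eta - X ω) ^ 2 ≠ 0 := ne_of_gt (hden ω)
      field_simp
      rfl
    rw [hgdef]
    simp only
    rw [← hinv]
    exact hlog
  by_cases hfint : Integrable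
      (fun ω => Real.log ((1 - η) * (1 + η * (m_eta - X ω) ^ 2 / s2eta))) P
  · calc (0:ℝ) = ∫ ω, g ω ∂P := hg_int.symm
      _ ≤ _ := integral_mono hint_g hfint hpt
  · rw [integral_undef hfint]
end
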